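/- Let H be a finite simple graph with at least one edge and let G = KG(H) be the complement of the line graph of H. In every proper coloring of G, every vertex of G has at least χ(G) − 1 distinct colors appearing on its closed neighborhood. -/

import Mathlib

open SimpleGraph

/-- `KG H` is the complement of the line graph of `H`: its vertices are the edges of `H`,
two of them being adjacent exactly when the corresponding edges of `H` are disjoint. -/
def KG {V : Type*} (H : SimpleGraph V) : SimpleGraph H.edgeSet where
  Adj e f := e ≠ f ∧ ∀ v, v ∈ (e : Sym2 V) → v ∉ (f : Sym2 V)
  symm := by
    constructor
    rintro e f ⟨hne, h⟩
    exact ⟨hne.symm, fun v hvf hve => h v hve hvf⟩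
  loopless := by
    constructor
    rintro e ⟨hne, -⟩
    exact hne rfl

/-- A proper coloring of a graph with colors in `ℕ`. -/
def IsProperColoring {W : Type*} (G : SimpleGraph W) (c : W → ℕ) : Prop :=
  ∀ ⦃u v⦄, G.Adj u v → c u ≠ c v

/-- The chromatic number: least `n` such that `G` has a proper coloring with `n` colors. -/
noncomputable def chromNum {W : Type*} (G : SimpleGraph W) : ℕ :=
  sInf {n | G.Colorable n}

/-- Number of colors appearing on the closed neighborhood of `v` under the coloring `c`. -/
noncomputable def closedNbhdColors {W : Type*} (G : SimpleGraph W) (c : W → ℕ) (v : W) : ℕ :=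
  (c '' {u | u = v ∨ G.Adj v u}).ncard

/-- In every proper coloring of the complement `KG H` of the line graph of `H`, every
vertex has at least `chromNum (KG H) - 1` colors in its closed neighborhood. -/
theorem closedNbhdColors_ge_of_KG {V : Type*} [Fintype V] (H : SimpleGraph V)
    (hE : H.edgeSet.Nonempty) (c : H.edgeSet → ℕ) (hc : IsProperColoring (KG H) c)
    (v : H.edgeSet) :
    chromNum (KG H) - 1 ≤ closedNbhdColors (KG H) c v := by
  classical
  set S : Set ℕ := c '' {u | u = v ∨ (KG H).Adj v u} with hSdef
  have hSfin : S.Finite := (Set.toFinite _).image c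
  obtain ⟨star, hstar⟩ := hSfin.infinite_compl.nonempty
  have hstar : star ∉ S := hstar
  obtain ⟨⟨a, b⟩, hab⟩ := Quot.exists_rep (v : Sym2 V)
  have hmemv : ∀ x, x ∈ (v : Sym2 V) ↔ x = a ∨ x = b := by
    intro x
    rw [← hab]
    exact Sym2.mem_iff
  -- non-neighbors of v share a vertex with v
  have hshare : ∀ u : H.edgeSet, ¬(u = v ∨ (KG H).Adj v u) →
      a ∈ (u : Sym2 V) ∨ b ∈ (u : Sym2 V) := by
    intro u hu
    push_neg at hu
    obtain ⟨hne, hnadj⟩ := hu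
    simp only [KG, Ne, not_and, not_forall, not_not] at hnadj
    obtain ⟨x, hxv, hxu⟩ := hnadj (fun h => hne h.symm)
    rcases (hmemv x).mp hxv with h | h
    · exact Or.inl (h ▸ hxu)
    · exact Or.inr (h ▸ hxu)
  set c' : H.edgeSet → ℕ := fun u =>
    if u = v ∨ (KG H).Adj v u then c u else if a ∈ (u : Sym2 V) then c v else star
    with hc'def
  have hcv_mem : c v ∈ S := ⟨v, Or.inl rfl, rfl⟩
  have hmemS : ∀ u, (u = v ∨ (KG H).Adj v u) → c u ∈ S := fun u hu => ⟨u, hu, rfl⟩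
  have hrange : ∀ u, c' u ∈ insert star S := by
    intro u
    by_cases hu : u = v ∨ (KG H).Adj v u
    · simp only [hc'def, if_pos hu]
      exact Set.mem_insert_of_mem _ (hmemS u hu)
    · simp only [hc'def, if_neg hu]
      by_cases ha : a ∈ (u : Sym2 V)
      · rw [if_pos ha]; exact Set.mem_insert_of_mem _ hcv_mem
      · rw [if_neg ha]; exact Set.mem_insert _ _
  have hproper : ∀ ⦃u w⦄, (KG H).Adj u w → c' u ≠ c' w := by
    intro u w huw
    obtain ⟨hne, hdisj⟩ := huw
    have hdisj' : ∀ x, x ∈ (u : Sym2 V) → x ∉ (w : Sym2 V) := hdisj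
    by_cases hu : u = v ∨ (KG H).Adj v u <;> by_cases hw : w = v ∨ (KG H).Adj v w
    · simp only [hc'def, if_pos hu, if_pos hw]
      exact hc ⟨hne, hdisj⟩
    · simp only [hc'def, if_pos hu, if_neg hw]
      by_cases haw : a ∈ (w : Sym2 V)
      · rw [if_pos haw]
        -- u ≠ v since w not adjacent to v, and u adjacent to w
        have huv : u ≠ v := by
          rintro rfl
          exact hw (Or.inr ⟨hne, hdisj⟩)
        have : (KG H).Adj v u := hu.resolve_left huv
        exact (hc this).symm
      · rw [if_neg haw]
        intro h
        exact hstar (h ▸ hmemS u hu)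
    · simp only [hc'def, if_neg hu, if_pos hw]
      by_cases hau : a ∈ (u : Sym2 V)
      · rw [if_pos hau]
        have hwv : w ≠ v := by
          rintro rfl
          exact hu (Or.inr ⟨fun h => hne h.symm, fun x hx hx' => hdisj' x hx' hx⟩)
        have : (KG H).Adj v w := hw.resolve_left hwv
        exact hc this
      · rw [if_neg hau]
        intro h
        exact hstar (h.symm ▸ hmemS w hw)
    · simp only [hc'def, if_neg hu, if_neg hw]
      by_cases hau : a ∈ (u : Sym2 V) <;> by_cases haw : a ∈ (w : Sym2 V)
      · exact absurd haw (hdisj' a hau)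
      · rw [if_pos hau, if_neg haw]
        intro h
        exact hstar (h ▸ hcv_mem)
      · rw [if_neg hau, if_pos haw]
        intro h
        exact hstar (h.symm ▸ hcv_mem)
      · rw [if_neg hau, if_neg haw]
        have hbu : b ∈ (u : Sym2 V) := (hshare u hu).resolve_left hau
        have hbw : b ∈ (w : Sym2 V) := (hshare w hw).resolve_left haw
        exact absurd hbw (hdisj' b hbu)
  -- build a coloring with values in insert star S
  have hfin : (insert star S : Set ℕ).Finite := hSfin.insert star
  haveI : Fintype (insert star S : Set ℕ) := hfin.fintype
  let C : (KG H).Coloring (insert star S : Set ℕ) :=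
    Coloring.mk (fun u => ⟨c' u, hrange u⟩)
      (fun {u w} h => by
        intro heq
        exact hproper h (congrArg Subtype.val heq))
  have hcolorable : (KG H).Colorable (Fintype.card (insert star S : Set ℕ)) :=
    C.colorable
  have hcard : Fintype.card (insert star S : Set ℕ) = S.ncard + 1 := by
    rw [← Nat.card_eq_fintype_card, Nat.card_coe_set_eq,
      Set.ncard_insert_of_notMem hstar hSfin]
  have hchrom : chromNum (KG H) ≤ S.ncard + 1 := by
    apply Nat.sInf_le
    rw [← hcard]
    exact hcolorable
  have : closedNbhdColors (KG H) c v = S.ncard := rfl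
  rw [this]
  omega
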